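/- Let ν be a measure on ℝ with ν({0}) = 0 and ∫ x² ν(dx) < ∞, and let b ∈ ℝ and σ ∈ ℝ. Define ψ : ℝ → ℂ by ψ(ξ) = i b ξ − σ²ξ²/2 + ∫_ℝ (e^{iξx} − 1 − iξx·1_{|x|≤1}(x)) ν(dx). Then ψ is twice differentiable on ℝ, with ψ'(ξ) = ib − σ²ξ + ∫_ℝ (i x e^{iξx} − i x·1_{|x|≤1}(x)) ν(dx) for all ξ ∈ ℝ; in particular ψ'(0) = i·(b + ∫_{|x|>1} x ν(dx)) and ψ''(0) = −(σ² + ∫_ℝ x² ν(dx)). -/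

import Mathlib

open MeasureTheory
open scoped ENNReal

lemma aux_hcoe (t : ℝ) : HasDerivAt (fun s : ℝ => (s : ℂ)) 1 t := by
  simpa using (hasDerivAt_id t).ofReal_comp

lemma aux_exp_deriv (t : ℝ) :
    HasDerivAt (fun s : ℝ => Complex.exp ((s : ℂ) * Complex.I))
      (Complex.exp ((t : ℂ) * Complex.I) * Complex.I) t := by
  simpa using ((aux_hcoe t).mul_const Complex.I).cexp

lemma aux_exp_sub_one (θ : ℝ) : ‖Complex.exp ((θ : ℂ) * Complex.I) - 1‖ ≤ |θ| := by
  have h := Convex.norm_image_sub_le_of_norm_hasDerivWithin_le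
    (f := fun s : ℝ => Complex.exp ((s : ℂ) * Complex.I))
    (f' := fun t : ℝ => Complex.exp ((t : ℂ) * Complex.I) * Complex.I) (C := 1)
    (s := Set.univ)
    (fun x _ => (aux_exp_deriv x).hasDerivWithinAt)
    (fun x _ => by simp [Complex.norm_exp_ofReal_mul_I])
    convex_univ (Set.mem_univ 0) (Set.mem_univ θ)
  simpa using h

lemma aux_exp_taylor (θ : ℝ) :
    ‖Complex.exp ((θ : ℂ) * Complex.I) - 1 - (θ : ℂ) * Complex.I‖ ≤ θ ^ 2 := by
  have h := Convex.norm_image_sub_le_of_norm_hasDerivWithin_le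
    (f := fun s : ℝ => Complex.exp ((s : ℂ) * Complex.I) - (s : ℂ) * Complex.I)
    (f' := fun t : ℝ => Complex.exp ((t : ℂ) * Complex.I) * Complex.I - 1 * Complex.I)
    (C := |θ|) (s := Set.Icc (-|θ|) |θ|)
    (fun x _ => ((aux_exp_deriv x).sub (((aux_hcoe x).mul_const Complex.I))).hasDerivWithinAt)
    (fun x hx => by
      show ‖Complex.exp ((x : ℂ) * Complex.I) * Complex.I - 1 * Complex.I‖ ≤ |θ|
      have : Complex.exp ((x : ℂ) * Complex.I) * Complex.I - 1 * Complex.I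
          = (Complex.exp ((x : ℂ) * Complex.I) - 1) * Complex.I := by ring
      rw [this, norm_mul, Complex.norm_I, mul_one]
      exact (aux_exp_sub_one x).trans (abs_le.2 ⟨hx.1, hx.2⟩))
    (convex_Icc _ _)
    ⟨neg_nonpos.2 (abs_nonneg θ), abs_nonneg θ⟩
    ⟨neg_abs_le θ, le_abs_self θ⟩
  simp only [Complex.ofReal_zero, zero_mul, Complex.exp_zero, sub_zero, Real.norm_eq_abs] at h
  calc ‖Complex.exp ((θ : ℂ) * Complex.I) - 1 - (θ:ℂ)*Complex.I‖
      = ‖Complex.exp ((θ : ℂ) * Complex.I) - (θ:ℂ)*Complex.I - 1‖ := by ring_nf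
    _ ≤ |θ| * |θ| := h
    _ = θ ^ 2 := by rw [← abs_mul, ← sq, abs_sq]

theorem stmt_14 (ν : Measure ℝ) (hν0 : ν {0} = 0)
    (hν2 : ∫⁻ x, ENNReal.ofReal (x ^ 2) ∂ν < ⊤)
    (b σ : ℝ) (ψ : ℝ → ℂ)
    (hψ : ∀ ξ : ℝ, ψ ξ =
      Complex.I * (b : ℂ) * (ξ : ℂ) - (σ : ℂ) ^ 2 * (ξ : ℂ) ^ 2 / 2 +
      ∫ x : ℝ, (Complex.exp (Complex.I * (ξ : ℂ) * (x : ℂ)) - 1 -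
        Complex.I * (ξ : ℂ) * (x : ℂ) * (if |x| ≤ 1 then (1 : ℂ) else 0)) ∂ν) :
    ∃ ψ' : ℝ → ℂ,
      (∀ ξ : ℝ, HasDerivAt ψ (ψ' ξ) ξ) ∧
      (∀ ξ : ℝ, ψ' ξ =
        Complex.I * (b : ℂ) - (σ : ℂ) ^ 2 * (ξ : ℂ) +
        ∫ x : ℝ, (Complex.I * (x : ℂ) * Complex.exp (Complex.I * (ξ : ℂ) * (x : ℂ)) -
          Complex.I * (x : ℂ) * (if |x| ≤ 1 then (1 : ℂ) else 0)) ∂ν) ∧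
      (∃ ψ'' : ℝ → ℂ,
        (∀ ξ : ℝ, HasDerivAt ψ' (ψ'' ξ) ξ) ∧
        ψ' 0 = Complex.I * ((b : ℂ) + ∫ x in {x : ℝ | 1 < |x|}, (x : ℂ) ∂ν) ∧
        ψ'' 0 = -((σ : ℂ) ^ 2 + ∫ x : ℝ, (x : ℂ) ^ 2 ∂ν)) := by
  classical
  have hrw : ∀ (ξ x : ℝ), Complex.I * (ξ:ℂ) * (x:ℂ) = ((ξ*x : ℝ) : ℂ) * Complex.I := by
    intro ξ x; push_cast; ring
  have hχm : Measurable (fun x : ℝ => if |x| ≤ 1 then (1:ℂ) else 0) :=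
    Measurable.ite (measurableSet_le measurable_abs measurable_const)
      measurable_const measurable_const
  have hx2 : Integrable (fun x : ℝ => x ^ 2) ν := by
    refine ⟨(measurable_id.pow_const 2).aestronglyMeasurable, ?_⟩
    rw [hasFiniteIntegral_iff_ofReal (Filter.Eventually.of_forall fun x => sq_nonneg x)]
    exact hν2
  have hnorm_exp : ∀ (ξ x : ℝ), ‖Complex.exp (Complex.I * ξ * x)‖ = 1 := by
    intro ξ x; rw [hrw]; exact Complex.norm_exp_ofReal_mul_I _
  have hexpm : ∀ t : ℝ, Measurable (fun x : ℝ => Complex.exp (Complex.I * t * x)) :=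
    fun t => Complex.measurable_exp.comp (Complex.measurable_ofReal.const_mul (Complex.I * t))
  -- measurability of F, F', F''
  have hm : ∀ t : ℝ, Measurable (fun x : ℝ => Complex.exp (Complex.I * t * x) - 1 -
      Complex.I * t * x * (if |x| ≤ 1 then (1:ℂ) else 0)) := fun t =>
    ((hexpm t).sub measurable_const).sub
      ((Complex.measurable_ofReal.const_mul (Complex.I * t)).mul hχm)
  have hm' : ∀ t : ℝ, Measurable (fun x : ℝ => Complex.I * x * Complex.exp (Complex.I * t * x) -
      Complex.I * x * (if |x| ≤ 1 then (1:ℂ) else 0)) := fun t =>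
    (((Complex.measurable_ofReal.const_mul Complex.I).mul (hexpm t))).sub
      ((Complex.measurable_ofReal.const_mul Complex.I).mul hχm)
  have hm'' : ∀ t : ℝ, Measurable (fun x : ℝ => -(x:ℂ)^2 * Complex.exp (Complex.I * t * x)) :=
    fun t => ((Complex.measurable_ofReal.pow_const 2).neg).mul (hexpm t)
  -- derivative of x ↦ exp(I t x) in t
  have hlin : ∀ (t x : ℝ), HasDerivAt (fun s : ℝ => Complex.I * (s:ℂ) * (x:ℂ))
      (Complex.I * x) t := by
    intro t x
    simpa using ((aux_hcoe t).const_mul Complex.I).mul_const (x:ℂ)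
  have hexp' : ∀ (t x : ℝ), HasDerivAt (fun s : ℝ => Complex.exp (Complex.I * s * x))
      (Complex.exp (Complex.I * t * x) * (Complex.I * x)) t := fun t x => (hlin t x).cexp
  -- step 1
  have key1 : ∀ ξ₀ : ℝ,
      Integrable (fun x : ℝ => Complex.I * x * Complex.exp (Complex.I * ξ₀ * x) -
        Complex.I * x * (if |x| ≤ 1 then (1:ℂ) else 0)) ν ∧
      HasDerivAt (fun ξ : ℝ => ∫ x : ℝ, (Complex.exp (Complex.I * ξ * x) - 1 -
          Complex.I * ξ * x * (if |x| ≤ 1 then (1:ℂ) else 0)) ∂ν)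
        (∫ x : ℝ, (Complex.I * x * Complex.exp (Complex.I * ξ₀ * x) -
          Complex.I * x * (if |x| ≤ 1 then (1:ℂ) else 0)) ∂ν) ξ₀ := by
    intro ξ₀
    refine hasDerivAt_integral_of_dominated_loc_of_deriv_le (s := Metric.ball ξ₀ 1)
      (F' := fun t x => Complex.I * x * Complex.exp (Complex.I * t * x) -
        Complex.I * x * (if |x| ≤ 1 then (1:ℂ) else 0))
      (bound := fun x => (|ξ₀| + 2) * x ^ 2) (Metric.ball_mem_nhds ξ₀ one_pos)
      (Filter.Eventually.of_forall fun t => (hm t).aestronglyMeasurable) ?_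
      (hm' ξ₀).aestronglyMeasurable ?_ (hx2.const_mul _) ?_
    · -- Integrable (F ξ₀)
      refine (hx2.const_mul (ξ₀ ^ 2 + 2)).mono' (hm ξ₀).aestronglyMeasurable
        (Filter.Eventually.of_forall fun x => ?_)
      by_cases hx : |x| ≤ 1
      · simp only [hx, if_true, mul_one]
        rw [hrw]
        calc ‖Complex.exp (((ξ₀*x:ℝ):ℂ) * Complex.I) - 1 - ((ξ₀*x:ℝ):ℂ) * Complex.I‖
            ≤ (ξ₀*x) ^ 2 := aux_exp_taylor _
          _ ≤ (ξ₀ ^ 2 + 2) * x ^ 2 := by nlinarith [sq_nonneg x, mul_pow ξ₀ x 2]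
      · simp only [hx, if_false, mul_zero, sub_zero]
        have h1 : (1:ℝ) ≤ x ^ 2 := by nlinarith [not_le.1 hx, sq_abs x]
        calc ‖Complex.exp (Complex.I * ξ₀ * x) - 1‖
            ≤ ‖Complex.exp (Complex.I * ξ₀ * x)‖ + ‖(1:ℂ)‖ := norm_sub_le _ _
          _ = 2 := by rw [hnorm_exp, norm_one]; norm_num
          _ ≤ (ξ₀ ^ 2 + 2) * x ^ 2 := by nlinarith [sq_nonneg ξ₀, sq_nonneg x]
    · -- bound
      refine Filter.Eventually.of_forall fun x t ht => ?_
      have ht' : |t - ξ₀| < 1 := by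
        rw [Metric.mem_ball, Real.dist_eq] at ht; exact ht
      have habs_t : |t| ≤ |ξ₀| + 1 := by
        calc |t| = |ξ₀ + (t - ξ₀)| := by ring_nf
          _ ≤ |ξ₀| + |t - ξ₀| := abs_add_le _ _
          _ ≤ |ξ₀| + 1 := by linarith
      by_cases hx : |x| ≤ 1
      · simp only [hx, if_true, mul_one]
        have heq : Complex.I * x * Complex.exp (Complex.I * t * x) - Complex.I * x
            = Complex.I * x * (Complex.exp (Complex.I * t * x) - 1) := by ring
        rw [heq, norm_mul, norm_mul, Complex.norm_I, one_mul, Complex.norm_real,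
          Real.norm_eq_abs, hrw]
        have h2 : ‖Complex.exp (((t*x:ℝ):ℂ) * Complex.I) - 1‖ ≤ |t| * |x| := by
          simpa [abs_mul] using aux_exp_sub_one (t*x)
        calc |x| * ‖Complex.exp (((t*x:ℝ):ℂ) * Complex.I) - 1‖
            ≤ |x| * (|t| * |x|) := by
              exact mul_le_mul_of_nonneg_left h2 (abs_nonneg x)
          _ ≤ (|ξ₀| + 2) * x ^ 2 := by
              nlinarith [abs_nonneg x, abs_nonneg t, sq_abs x, abs_nonneg ξ₀,
                mul_le_mul_of_nonneg_right habs_t (abs_nonneg x)]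
      · simp only [hx, if_false, mul_zero, sub_zero]
        have h1 : (1:ℝ) ≤ x ^ 2 := by nlinarith [not_le.1 hx, sq_abs x]
        rw [norm_mul, norm_mul, Complex.norm_I, one_mul, Complex.norm_real,
          Real.norm_eq_abs, hnorm_exp, mul_one]
        nlinarith [abs_nonneg x, sq_abs x, abs_nonneg ξ₀]
    · -- differentiability
      refine Filter.Eventually.of_forall fun x t _ => ?_
      have h3 : HasDerivAt (fun s : ℝ => Complex.I * (s:ℂ) * (x:ℂ) *
          (if |x| ≤ 1 then (1:ℂ) else 0))
          (Complex.I * x * (if |x| ≤ 1 then (1:ℂ) else 0)) t := (hlin t x).mul_const _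
      have := ((hexp' t x).sub_const 1).sub h3
      exact this.congr_deriv (by ring)
  -- step 2
  have key2 : ∀ ξ₀ : ℝ,
      Integrable (fun x : ℝ => -(x:ℂ)^2 * Complex.exp (Complex.I * ξ₀ * x)) ν ∧
      HasDerivAt (fun ξ : ℝ => ∫ x : ℝ, (Complex.I * x * Complex.exp (Complex.I * ξ * x) -
          Complex.I * x * (if |x| ≤ 1 then (1:ℂ) else 0)) ∂ν)
        (∫ x : ℝ, -(x:ℂ)^2 * Complex.exp (Complex.I * ξ₀ * x) ∂ν) ξ₀ := by
    intro ξ₀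
    refine hasDerivAt_integral_of_dominated_loc_of_deriv_le (s := Metric.ball ξ₀ 1)
      (F' := fun t x => -(x:ℂ)^2 * Complex.exp (Complex.I * t * x))
      (bound := fun x => x ^ 2) (Metric.ball_mem_nhds ξ₀ one_pos)
      (Filter.Eventually.of_forall fun t => (hm' t).aestronglyMeasurable) (key1 ξ₀).1
      (hm'' ξ₀).aestronglyMeasurable ?_ hx2 ?_
    · refine Filter.Eventually.of_forall fun x t _ => ?_
      rw [norm_mul, norm_neg, norm_pow, Complex.norm_real, Real.norm_eq_abs, hnorm_exp,
        mul_one, sq_abs]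
    · refine Filter.Eventually.of_forall fun x t _ => ?_
      have h4 := ((hexp' t x).const_mul (Complex.I * (x:ℂ))).sub_const
        (Complex.I * x * (if |x| ≤ 1 then (1:ℂ) else 0))
      convert h4 using 1
      linear_combination (-(Complex.exp (Complex.I * t * x) * (x:ℂ)^2)) * Complex.I_sq
  -- assemble
  refine ⟨fun ξ => Complex.I * (b:ℂ) - (σ:ℂ)^2 * (ξ:ℂ) +
      ∫ x : ℝ, (Complex.I * x * Complex.exp (Complex.I * ξ * x) -
        Complex.I * x * (if |x| ≤ 1 then (1:ℂ) else 0)) ∂ν, ?_, fun ξ => rfl,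
    ⟨fun ξ => -(σ:ℂ)^2 + ∫ x : ℝ, -(x:ℂ)^2 * Complex.exp (Complex.I * ξ * x) ∂ν, ?_, ?_, ?_⟩⟩
  · intro ξ
    have hψeq : ψ = fun ξ : ℝ => Complex.I * (b : ℂ) * (ξ : ℂ) -
        (σ : ℂ) ^ 2 * (ξ : ℂ) ^ 2 / 2 +
        ∫ x : ℝ, (Complex.exp (Complex.I * (ξ : ℂ) * (x : ℂ)) - 1 -
          Complex.I * (ξ : ℂ) * (x : ℂ) * (if |x| ≤ 1 then (1 : ℂ) else 0)) ∂ν := funext hψ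
    rw [hψeq]
    have ha : HasDerivAt (fun ξ : ℝ => Complex.I * (b:ℂ) * (ξ:ℂ)) (Complex.I * b) ξ := by
      simpa using (aux_hcoe ξ).const_mul (Complex.I * (b:ℂ))
    have hb : HasDerivAt (fun ξ : ℝ => (σ:ℂ)^2 * (ξ:ℂ)^2 / 2) ((σ:ℂ)^2 * ξ) ξ := by
      have hsq : HasDerivAt (fun y : ℝ => ((y:ℂ))^2) (2*(ξ:ℂ)) ξ := by
        have := hasDerivAt_pow 2 ((ξ:ℝ):ℂ)
        simpa using this.comp_ofReal
      have := (hsq.const_mul ((σ:ℂ)^2)).div_const 2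
      exact this.congr_deriv (by ring)
    exact (ha.sub hb).add (key1 ξ).2
  · intro ξ
    have ha : HasDerivAt (fun ξ : ℝ => Complex.I * (b:ℂ) - (σ:ℂ)^2 * (ξ:ℂ)) (-(σ:ℂ)^2) ξ := by
      exact ((hasDerivAt_const ξ (Complex.I * (b:ℂ))).sub
        ((aux_hcoe ξ).const_mul ((σ:ℂ)^2))).congr_deriv (by ring)
    exact ha.add (key2 ξ).2
  · -- ψ' 0
    show Complex.I * (b:ℂ) - (σ:ℂ)^2 * ((0:ℝ):ℂ) +
        ∫ x : ℝ, (Complex.I * x * Complex.exp (Complex.I * ((0:ℝ):ℂ) * x) -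
          Complex.I * x * (if |x| ≤ 1 then (1:ℂ) else 0)) ∂ν =
      Complex.I * ((b:ℂ) + ∫ x in {x : ℝ | 1 < |x|}, (x:ℂ) ∂ν)
    have hset : MeasurableSet {x : ℝ | 1 < |x|} :=
      measurableSet_lt measurable_const measurable_abs
    have h1 : (fun x : ℝ => Complex.I * x * Complex.exp (Complex.I * ((0:ℝ):ℂ) * x) -
        Complex.I * x * (if |x| ≤ 1 then (1:ℂ) else 0))
        = {x : ℝ | 1 < |x|}.indicator (fun x : ℝ => Complex.I * (x:ℂ)) := by
      funext x
      by_cases hx : |x| ≤ 1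
      · simp [hx, Set.indicator, not_lt.2 hx]
      · simp [hx, Set.indicator, not_le.1 hx]
    rw [h1, integral_indicator hset, integral_const_mul]
    push_cast
    ring
  · -- ψ'' 0
    show -(σ:ℂ)^2 + ∫ x : ℝ, -(x:ℂ)^2 * Complex.exp (Complex.I * ((0:ℝ):ℂ) * x) ∂ν =
      -((σ:ℂ)^2 + ∫ x : ℝ, (x:ℂ)^2 ∂ν)
    have h3 : (fun x : ℝ => -(x:ℂ)^2 * Complex.exp (Complex.I * ((0:ℝ):ℂ) * x))
        = fun x : ℝ => -((x:ℂ)^2) := by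
      funext x; simp
    rw [h3, integral_neg]
    ring
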